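/- Let T be a commutative ring, R a nontrivial T-algebra, n ≥ 1, and K = T(n,R) the algebra of upper triangular n×n matrices over R. Let φ be a T-algebra automorphism of K that maps the diagonal subalgebra L (matrices with all off-diagonal entries zero) onto itself and maps the set M of strictly upper triangular matrices onto itself. Then φ fixes every diagonal matrix unit: φ(E_{ii}) = E_{ii} for all i = 1, …, n, where E_{ii} is the matrix with 1 in position (i,i) and 0 elsewhere. -/

import Mathlib

/-- The `T`-subalgebra of upper triangular `n × n` matrices over `R`. -/
def triangularSubalgebra (T R : Type*) [CommRing T] [Ring R] [Algebra T R] (n : ℕ) :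
    Subalgebra T (Matrix (Fin n) (Fin n) R) where
  carrier := {A | ∀ ⦃i j : Fin n⦄, j < i → A i j = 0}
  add_mem' := fun {A B} hA hB i j hij => by
    simp [Matrix.add_apply, hA hij, hB hij]
  mul_mem' := fun {A B} hA hB i j hij => by
    simp only [Matrix.mul_apply]
    refine Finset.sum_eq_zero fun k _ => ?_
    rcases lt_or_ge k i with h | h
    · rw [hA h, zero_mul]
    · rw [hB (lt_of_lt_of_le hij h), mul_zero]
  algebraMap_mem' := fun t i j hij => by
    simp [Matrix.algebraMap_matrix_apply, (ne_of_lt hij).symm]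

/-- The set of strictly upper triangular matrices inside the triangular matrix algebra. -/
def strictlyUpper (T R : Type*) [CommRing T] [Ring R] [Algebra T R] (n : ℕ) :
    Set (triangularSubalgebra T R n) :=
  {A | ∀ i j : Fin n, j ≤ i → (A : Matrix (Fin n) (Fin n) R) i j = 0}

/-- The entrywise action of an automorphism `α` of `R` on the triangular matrix algebra. -/
def entrywiseMap (T R : Type*) [CommRing T] [Ring R] [Algebra T R] (n : ℕ)
    (α : R ≃ₐ[T] R) (A : triangularSubalgebra T R n) : triangularSubalgebra T R n :=
  ⟨Matrix.of fun i j => α ((A : Matrix (Fin n) (Fin n) R) i j),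
    fun i j hij => by simp [Matrix.of_apply, A.2 hij]⟩

/-- The diagonal matrix unit `E i i` as an element of the triangular matrix algebra. -/
def diagMatrixUnit (T R : Type*) [CommRing T] [Ring R] [Algebra T R] (n : ℕ) (i : Fin n) :
    triangularSubalgebra T R n :=
  ⟨Matrix.single i i (1 : R), fun a b hab =>
    Matrix.single_apply_of_ne _ _ _ _ _
      (by rintro ⟨rfl, rfl⟩; exact lt_irrefl _ hab)⟩

/-- If an automorphism of the upper triangular matrix algebra maps the diagonal subalgebra
onto itself and the set of strictly upper triangular matrices onto itself, then it fixes
every diagonal matrix unit `E i i`. -/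
theorem stmt8 (T R : Type*) [CommRing T] [Ring R] [Algebra T R] [Nontrivial R]
    (n : ℕ) (hn : 1 ≤ n)
    (φ : triangularSubalgebra T R n ≃ₐ[T] triangularSubalgebra T R n)
    (hdiag : φ '' {A : triangularSubalgebra T R n |
        ∀ i j : Fin n, i ≠ j → (A : Matrix (Fin n) (Fin n) R) i j = 0} =
      {A : triangularSubalgebra T R n |
        ∀ i j : Fin n, i ≠ j → (A : Matrix (Fin n) (Fin n) R) i j = 0})
    (htri : φ '' strictlyUpper T R n = strictlyUpper T R n) :
    ∀ i : Fin n, φ (diagMatrixUnit T R n i) = diagMatrixUnit T R n i := by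
  classical
  set f : Fin n → Fin n → R := fun i k =>
    ((φ (diagMatrixUnit T R n i) : triangularSubalgebra T R n) : Matrix (Fin n) (Fin n) R) k k
    with hf
  -- φ (E i) is a diagonal matrix
  have hφd : ∀ i : Fin n, ∀ a b : Fin n, a ≠ b →
      ((φ (diagMatrixUnit T R n i) : triangularSubalgebra T R n) :
        Matrix (Fin n) (Fin n) R) a b = 0 := by
    intro i
    have hmem : φ (diagMatrixUnit T R n i) ∈ {A : triangularSubalgebra T R n |
        ∀ i j : Fin n, i ≠ j → (A : Matrix (Fin n) (Fin n) R) i j = 0} := by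
      rw [← hdiag]
      refine ⟨diagMatrixUnit T R n i, fun a b hab => ?_, rfl⟩
      exact Matrix.single_apply_of_ne _ _ _ _ _
        (fun h => hab (h.1.symm.trans h.2))
    exact hmem
  -- column sums are 1
  have hone : (∑ i : Fin n, diagMatrixUnit T R n i) = (1 : triangularSubalgebra T R n) := by
    apply Subtype.ext
    push_cast
    ext a b
    rw [Matrix.sum_apply]
    simp only [diagMatrixUnit]
    rcases eq_or_ne a b with rfl | hab
    · rw [Finset.sum_eq_single a]
      · simp [Matrix.single_apply_same, Matrix.one_apply]
      · intro c _ hc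
        exact Matrix.single_apply_of_ne _ _ _ _ _ (fun h => hc h.1)
      · exact fun h => absurd (Finset.mem_univ a) h
    · rw [Matrix.one_apply_ne hab]
      exact Finset.sum_eq_zero fun c _ =>
        Matrix.single_apply_of_ne _ _ _ _ _
          (fun h => hab (h.1.symm.trans h.2))
  have hsumcol : ∀ k : Fin n, (∑ i : Fin n, f i k) = 1 := by
    intro k
    have : ((φ (∑ i : Fin n, diagMatrixUnit T R n i) : triangularSubalgebra T R n) :
        Matrix (Fin n) (Fin n) R) k k = 1 := by
      rw [hone, map_one]
      simp [Matrix.one_apply]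
    rw [map_sum] at this
    simpa [hf, Matrix.sum_apply] using this
  -- key relation
  have hrel : ∀ (i j k l : Fin n), j ≤ i → k < l → ∀ r : R,
      f i k * r * f j l = 0 := by
    intro i j k l hji hkl r
    set A : triangularSubalgebra T R n :=
      ⟨Matrix.single k l r, fun a b hab =>
        Matrix.single_apply_of_ne _ _ _ _ _
          (fun h => absurd (h.1 ▸ h.2 ▸ hkl) (not_lt.2 hab.le))⟩ with hA
    have hAmem : A ∈ strictlyUpper T R n := by
      intro a b hab
      exact Matrix.single_apply_of_ne _ _ _ _ _
        (fun h => absurd (h.1 ▸ h.2 ▸ hkl) (not_lt.2 hab))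
    -- φ.symm A is strictly upper
    obtain ⟨B, hB, hBA⟩ : A ∈ φ '' strictlyUpper T R n := by rw [htri]; exact hAmem
    have hzero : diagMatrixUnit T R n i * B * diagMatrixUnit T R n j = 0 := by
      apply Subtype.ext
      push_cast
      ext a b
      show (Matrix.single i i (1 : R) * (B : Matrix (Fin n) (Fin n) R) *
        Matrix.single j j (1 : R)) a b = (0 : Matrix (Fin n) (Fin n) R) a b
      rw [Matrix.zero_apply]
      rcases eq_or_ne b j with rfl | hbj
      · rw [Matrix.mul_single_apply_same]
        rcases eq_or_ne a i with rfl | hai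
        · rw [Matrix.single_mul_apply_same, hB a b hji, mul_zero, zero_mul]
        · rw [Matrix.single_mul_apply_of_ne (a := a) (b := b) (h := hai), zero_mul]
      · rw [Matrix.mul_single_apply_of_ne (a := a) (b := b) (hbj := hbj)]
    have hφzero : φ (diagMatrixUnit T R n i) * A * φ (diagMatrixUnit T R n j) = 0 := by
      rw [← hBA, ← map_mul, ← map_mul, hzero, map_zero]
    have hentry := congrArg (fun X : triangularSubalgebra T R n =>
      (X : Matrix (Fin n) (Fin n) R) k l) hφzero
    simp only [Subalgebra.coe_mul, ZeroMemClass.coe_zero, Matrix.zero_apply] at hentry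
    rw [Matrix.mul_apply, Finset.sum_eq_single l] at hentry
    · rw [Matrix.mul_apply, Finset.sum_eq_single k] at hentry
      · simpa [hf, hA, Matrix.single_apply_same] using hentry
      · intro c _ hc
        rw [hφd i k c (Ne.symm hc), zero_mul]
      · intro h; exact absurd (Finset.mem_univ k) h
    · intro d _ hd
      rw [hφd j d l hd, mul_zero]
    · intro h; exact absurd (Finset.mem_univ l) h
  -- f j l = 0 for j < l, by strong induction on j
  have hP : ∀ (m : ℕ) (j l : Fin n), (j : ℕ) < m → j < l → f j l = 0 := by
    intro m
    induction m with
    | zero => intro j l h; omega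
    | succ m IH =>
      intro j l hjm hjl
      have h1 : f j l = ∑ i : Fin n, f i j * f j l := by
        rw [← Finset.sum_mul, hsumcol j, one_mul]
      rw [h1]
      apply Finset.sum_eq_zero
      intro i _
      rcases le_or_gt j i with hle | hlt
      · simpa using hrel i j j l hle hjl 1
      · rw [IH i j (by have : (i : ℕ) < (j : ℕ) := hlt; omega) hlt, zero_mul]
  -- f i k = 0 for k < i, by descending induction
  have hQ : ∀ (m : ℕ) (i k : Fin n), n - (i : ℕ) ≤ m → k < i → f i k = 0 := by
    intro m
    induction m with
    | zero => intro i k h hki; have := i.isLt; omega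
    | succ m IH =>
      intro i k him hki
      have h1 : f i k = ∑ j : Fin n, f i k * f j i := by
        rw [← Finset.mul_sum, hsumcol i, mul_one]
      rw [h1]
      apply Finset.sum_eq_zero
      intro j _
      rcases le_or_gt j i with hle | hlt
      · simpa using hrel i j k i hle hki 1
      · rw [IH j i (by have : (i : ℕ) < (j : ℕ) := hlt; have := j.isLt; omega) hlt, mul_zero]
  have hoffdiag : ∀ (i k : Fin n), i ≠ k → f i k = 0 := by
    intro i k hik
    rcases lt_or_gt_of_ne hik with h | h
    · exact hP ((i : ℕ) + 1) i k (Nat.lt_succ_self _) h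
    · exact hQ (n - (i : ℕ)) i k le_rfl h
  have hkk : ∀ k : Fin n, f k k = 1 := by
    intro k
    have := hsumcol k
    rwa [Finset.sum_eq_single k (fun i _ hi => hoffdiag i k hi)
      (fun h => absurd (Finset.mem_univ k) h)] at this
  -- conclude
  intro i
  apply Subtype.ext
  ext a b
  rcases eq_or_ne a b with rfl | hab
  · rcases eq_or_ne i a with rfl | hia
    · simpa [hf, diagMatrixUnit, Matrix.single_apply_same] using hkk i
    · have h0 : f i a = 0 := hoffdiag i a hia
      have h1 : (diagMatrixUnit T R n i : Matrix (Fin n) (Fin n) R) a a = 0 :=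
        Matrix.single_apply_of_ne _ _ _ _ _ (fun h => hia h.1)
      rw [h1]
      exact h0
  · rw [hφd i a b hab]
    exact (Matrix.single_apply_of_ne _ _ _ _ _
      (fun h => hab (h.1.symm.trans h.2))).symm
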